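/- Under the frame intertwining assumption, x ∈ N(A) if and only if for every k ∈ ℕ the coefficient vector (⟨x_m, e_k^m⟩)_m lies in the null space of Λ_k; moreover, Ax = y if and only if Λ_k·(⟨x_m,e_k^m⟩)_m = (⟨y_n,f_k^n⟩)_n for all k ∈ ℕ. -/

import Mathlib

open scoped ComplexInnerProductSpace

/-- Under the frame intertwining assumption, `x ∈ N(A)` iff for every `k` the
coefficient vector `(⟪e m k, x m⟫)_m` lies in the null space of `Λ k`; and `Ax = y` iff
`Λ k ⬝ (⟪e m k, x m⟫)_m = (⟪f n k, y n⟫)_n` for all `k`. -/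
theorem frame_nullspace_and_solution_characterization
    {M N : ℕ}
    {Xs : Fin M → Type*} [∀ m, NormedAddCommGroup (Xs m)]
    [∀ m, InnerProductSpace ℂ (Xs m)] [∀ m, CompleteSpace (Xs m)]
    {Ys : Fin N → Type*} [∀ n, NormedAddCommGroup (Ys n)]
    [∀ n, InnerProductSpace ℂ (Ys n)] [∀ n, CompleteSpace (Ys n)]
    (A : PiLp 2 Xs →L[ℂ] PiLp 2 Ys)
    (e : ∀ m, ℕ → Xs m) (f : ∀ n, ℕ → Ys n)
    (C1 C2 : ℝ) (hC1 : 0 < C1) (hC2 : 0 < C2)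
    (hframe_f : ∀ (n) (y : Ys n), (Summable fun k => ‖⟪f n k, y⟫‖ ^ 2) ∧
      C1 * ‖y‖ ^ 2 ≤ ∑' k, ‖⟪f n k, y⟫‖ ^ 2 ∧ ∑' k, ‖⟪f n k, y⟫‖ ^ 2 ≤ C2 * ‖y‖ ^ 2)
    (Λ : ℕ → Matrix (Fin N) (Fin M) ℂ)
    (hΛ : ∀ (k : ℕ) (x : PiLp 2 Xs) (n : Fin N),
      ⟪f n k, A x n⟫ = ∑ m, Λ k n m * ⟪e m k, x m⟫) :
    (∀ x : PiLp 2 Xs,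
      A x = 0 ↔ ∀ k, (Λ k).mulVec (fun m => ⟪e m k, x m⟫) = 0) ∧
    (∀ (x : PiLp 2 Xs) (y : PiLp 2 Ys),
      A x = y ↔ ∀ k,
        (Λ k).mulVec (fun m => ⟪e m k, x m⟫) = fun n => ⟪f n k, y n⟫) := by
  -- key: if all frame coefficients of z vanish, then z = 0
  have key : ∀ (n : Fin N) (z : Ys n), (∀ k, ⟪f n k, z⟫ = 0) → z = 0 := by
    intro n z hz
    have h1 := (hframe_f n z).2.1
    have h0 : (∑' k, ‖⟪f n k, z⟫‖ ^ 2) = 0 := by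
      simp [hz]
    rw [h0] at h1
    have h2 : C1 * ‖z‖ ^ 2 = 0 := le_antisymm h1 (mul_nonneg hC1.le (sq_nonneg _))
    have h3 : ‖z‖ ^ 2 = 0 := (mul_eq_zero.mp h2).resolve_left hC1.ne'
    exact norm_eq_zero.mp (pow_eq_zero_iff two_ne_zero |>.mp h3)
  have main : ∀ (x : PiLp 2 Xs) (y : PiLp 2 Ys),
      A x = y ↔ ∀ k,
        (Λ k).mulVec (fun m => ⟪e m k, x m⟫) = fun n => ⟪f n k, y n⟫ := by
    intro x y
    constructor
    · rintro rfl k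
      funext n
      simp [Matrix.mulVec, dotProduct, ← hΛ k x n]
    · intro h
      apply PiLp.ext; intro n
      have hz : ∀ k, ⟪f n k, A x n - y n⟫ = 0 := by
        intro k
        rw [inner_sub_right]
        have := congrFun (h k) n
        simp only [Matrix.mulVec, dotProduct] at this
        rw [hΛ k x n, this, sub_self]
      have := key n _ hz
      have := sub_eq_zero.mp this
      exact this
  refine ⟨?_, main⟩
  intro x
  have := main x 0
  simp only [PiLp.zero_apply, inner_zero_right] at this
  rw [this]
  constructor
  · intro h k; rw [h k]; rfl
  · intro h k; rw [h k]; rfl
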